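/- Let X be a nonempty compact subset of ℂ and for x ∈ X let χ_x denote the evaluation character of R(X), χ_x(u) = u(x), regarded as a continuous linear functional on R(X). The relation on X defined by x ∼ y iff ‖χ_x − χ_y‖ < 2 (the norm being the dual norm on the continuous dual of R(X)) is an equivalence relation; in particular it is transitive: if ‖χ_x − χ_y‖ < 2 and ‖χ_y − χ_z‖ < 2 then ‖χ_x − χ_z‖ < 2. -/

import Mathlib

def rationalFunctionsOn (X : Set ℂ) : Set C(X, ℂ) :=
  {u | ∃ p q : Polynomial ℂ, (∀ z ∈ X, q.eval z ≠ 0) ∧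
    ∀ z : X, u z = p.eval (z : ℂ) / q.eval (z : ℂ)}

noncomputable def RX (X : Set ℂ) [CompactSpace X] : Subalgebra ℂ C(X, ℂ) :=
  (Algebra.adjoin ℂ (rationalFunctionsOn X)).topologicalClosure

open Polynomial in
noncomputable def ratSubalg (X : Set ℂ) : Subalgebra ℂ C(X, ℂ) where
  carrier := rationalFunctionsOn X
  mul_mem' := by
    rintro u v ⟨p1, q1, hq1, h1⟩ ⟨p2, q2, hq2, h2⟩
    refine ⟨p1 * p2, q1 * q2, fun z hz => ?_, fun z => ?_⟩
    · simp only [eval_mul]; exact mul_ne_zero (hq1 z hz) (hq2 z hz)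
    · simp only [ContinuousMap.mul_apply, h1 z, h2 z, eval_mul]
      field_simp
  add_mem' := by
    rintro u v ⟨p1, q1, hq1, h1⟩ ⟨p2, q2, hq2, h2⟩
    refine ⟨p1 * q2 + p2 * q1, q1 * q2, fun z hz => ?_, fun z => ?_⟩
    · simp only [eval_mul]; exact mul_ne_zero (hq1 z hz) (hq2 z hz)
    · simp only [ContinuousMap.add_apply, h1 z, h2 z, eval_add, eval_mul]
      rw [div_add_div _ _ (hq1 z z.2) (hq2 z z.2)]
      ring_nf
  algebraMap_mem' := by
    intro c
    refine ⟨Polynomial.C c, 1, fun z hz => by simp, fun z => by simp⟩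

lemma adjoin_rat_le (X : Set ℂ) :
    Algebra.adjoin ℂ (rationalFunctionsOn X) ≤ ratSubalg X :=
  Algebra.adjoin_le (fun u hu => hu)

lemma rat_mem_RX {X : Set ℂ} [CompactSpace X] {u : C(X, ℂ)}
    (hu : u ∈ rationalFunctionsOn X) : u ∈ RX X :=
  (Subalgebra.le_topologicalClosure _) (Algebra.subset_adjoin hu)

/-- pointwise inverse of a continuous map -/
noncomputable def cinv {X : Set ℂ} (u : C(X, ℂ)) (h : ∀ z, u z ≠ 0) : C(X, ℂ) :=
  ⟨fun z => (u z)⁻¹, u.continuous.inv₀ h⟩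

@[simp] lemma cinv_apply {X : Set ℂ} (u : C(X, ℂ)) (h : ∀ z, u z ≠ 0) (z : X) :
    cinv u h z = (u z)⁻¹ := rfl

lemma cinv_mem_rat {X : Set ℂ} {v : C(X, ℂ)} (hv : v ∈ rationalFunctionsOn X)
    (h : ∀ z, v z ≠ 0) : cinv v h ∈ rationalFunctionsOn X := by
  obtain ⟨p, q, hq, hpq⟩ := hv
  refine ⟨q, p, fun z hz => ?_, fun z => ?_⟩
  · have := h ⟨z, hz⟩
    rw [hpq ⟨z, hz⟩] at this
    intro h0
    simp [h0] at this
  · rw [cinv_apply, hpq z, inv_div]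

lemma cinv_mem_RX {X : Set ℂ} [CompactSpace X] [Nonempty X] {u : C(X, ℂ)} (hu : u ∈ RX X)
    (h : ∀ z, u z ≠ 0) : cinv u h ∈ RX X := by
  obtain ⟨z0, hz0⟩ : ∃ z0 : X, ∀ z, ‖u z0‖ ≤ ‖u z‖ := by
    obtain ⟨z0, _, hm⟩ := isCompact_univ.exists_isMinOn Set.univ_nonempty
      (u.continuous.norm.continuousOn)
    exact ⟨z0, fun z => hm (Set.mem_univ z)⟩
  set δ := ‖u z0‖ with hδdef
  have hδ : 0 < δ := norm_pos_iff.2 (h z0)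
  have hu' : u ∈ closure ((Algebra.adjoin ℂ (rationalFunctionsOn X) : Subalgebra ℂ C(X, ℂ)) :
      Set C(X, ℂ)) := hu
  show cinv u h ∈ closure ((Algebra.adjoin ℂ (rationalFunctionsOn X) :
      Subalgebra ℂ C(X, ℂ)) : Set C(X, ℂ))
  apply Metric.mem_closure_iff.2
  intro ε hε
  set η := min (δ / 2) (ε * δ ^ 2 / 4) with hηdef
  have hη : 0 < η := lt_min (by positivity) (by positivity)
  obtain ⟨v, hvA, hv⟩ := Metric.mem_closure_iff.1 hu' η hη
  have hvrat : v ∈ rationalFunctionsOn X := adjoin_rat_le X hvA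
  have hdist : ∀ z : X, ‖u z - v z‖ ≤ η := fun z => by
    have h1 : dist (u z) (v z) ≤ dist u v := ContinuousMap.dist_apply_le_dist z
    rw [dist_eq_norm] at h1
    exact h1.trans hv.le
  have hvz : ∀ z, δ / 2 ≤ ‖v z‖ := by
    intro z
    have h2 : ‖u z‖ - ‖v z‖ ≤ ‖u z - v z‖ := norm_sub_norm_le _ _
    have h3 : δ ≤ ‖u z‖ := hz0 z
    have h4 := hdist z
    have h5 : η ≤ δ / 2 := min_le_left _ _
    linarith
  have hvne : ∀ z, v z ≠ 0 := fun z => by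
    have := hvz z
    intro h0; rw [h0] at this; simp at this; linarith
  refine ⟨cinv v hvne, Algebra.subset_adjoin (cinv_mem_rat hvrat hvne), ?_⟩
  rw [ContinuousMap.dist_lt_iff hε]
  intro z
  rw [dist_eq_norm]
  have key : (u z)⁻¹ - (v z)⁻¹ = (v z - u z) / (u z * v z) := by
    field_simp [h z, hvne z]
  rw [cinv_apply, cinv_apply, key]
  have hnum : ‖v z - u z‖ ≤ η := by rw [norm_sub_rev]; exact hdist z
  have hden : δ * (δ / 2) ≤ ‖u z * v z‖ := by
    rw [norm_mul]
    exact mul_le_mul (hz0 z) (hvz z) (by positivity) (norm_nonneg _)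
  have hden' : (0:ℝ) < ‖u z * v z‖ := lt_of_lt_of_le (by positivity) hden
  rw [norm_div]
  have h6 : η ≤ ε * δ ^ 2 / 4 := min_le_right _ _
  calc ‖v z - u z‖ / ‖u z * v z‖ ≤ η / (δ * (δ / 2)) := by
        apply div_le_div₀ hη.le hnum (by positivity) hden
    _ ≤ (ε * δ ^ 2 / 4) / (δ * (δ / 2)) := by
        apply div_le_div_of_nonneg_right h6 (by positivity) |>.trans_eq rfl
    _ = ε / 2 := by field_simp; ring
    _ < ε := by linarith

open Complex in
lemma mobius_norm_le {w a : ℂ} (hw : ‖w‖ ≤ 1) (ha : ‖a‖ ≤ 1) :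
    ‖w - a‖ ≤ ‖1 - (starRingEnd ℂ) a * w‖ := by
  have key : normSq (1 - (starRingEnd ℂ) a * w) - normSq (w - a)
      = (1 - normSq a) * (1 - normSq w) := by
    simp [normSq_apply, mul_re, mul_im, sub_re, sub_im, conj_re, conj_im, one_re, one_im]
    ring
  have h1 : normSq w ≤ 1 := by
    rw [normSq_eq_norm_sq]; exact pow_le_one₀ (norm_nonneg _) hw
  have h2 : normSq a ≤ 1 := by
    rw [normSq_eq_norm_sq]; exact pow_le_one₀ (norm_nonneg _) ha
  have h3 : normSq (w - a) ≤ normSq (1 - (starRingEnd ℂ) a * w) := by nlinarith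
  rw [norm_def, norm_def]
  exact Real.sqrt_le_sqrt h3

open Complex in
lemma disk_ineq {w a : ℂ} {r s : ℝ} (hw : ‖w‖ ≤ r) (ha : ‖a‖ ≤ s)
    (hr1 : r ≤ 1) (hs1 : s ≤ 1) (hr0 : 0 ≤ r) (hs0 : 0 ≤ s) :
    ‖w + a‖ * (1 + r * s) ≤ (r + s) * ‖1 + (starRingEnd ℂ) a * w‖ := by
  have hrs : (0:ℝ) < 1 + r * s := by nlinarith
  apply le_of_pow_le_pow_left₀ (n := 2) two_ne_zero
    (by positivity)
  set u := normSq w with hu'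
  set v := normSq a with hv'
  set t := ((starRingEnd ℂ) a * w).re with ht'
  have sqnorm : ∀ z : ℂ, ‖z‖ ^ 2 = normSq z := fun z => Complex.sq_norm z
  have e1 : ‖w + a‖ ^ 2 = u + v + 2 * t := by
    rw [sqnorm, normSq_add]
    have : (w * (starRingEnd ℂ) a).re = t := by rw [ht', mul_comm]
    rw [this]
  have e2 : ‖1 + (starRingEnd ℂ) a * w‖ ^ 2 = 1 + u * v + 2 * t := by
    rw [sqnorm, normSq_add]
    simp only [normSq_one, map_mul, normSq_conj, one_mul]
    have : ((starRingEnd ℂ) ((starRingEnd ℂ) a) * (starRingEnd ℂ) w).re = t := by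
      rw [ht']; simp [mul_re, conj_re, conj_im]
    rw [this]
    ring
  have ht : t ≤ r * s := by
    calc t ≤ |((starRingEnd ℂ) a * w).re| := le_abs_self _
      _ ≤ ‖(starRingEnd ℂ) a * w‖ := abs_re_le_norm _
      _ = ‖a‖ * ‖w‖ := by rw [norm_mul, RCLike.norm_conj]
      _ ≤ s * r := mul_le_mul ha hw (norm_nonneg _) hs0
      _ = r * s := mul_comm _ _
  have hu : u ≤ r ^ 2 := by
    rw [hu', normSq_eq_norm_sq]
    exact pow_le_pow_left₀ (norm_nonneg _) hw 2
  have hv : v ≤ s ^ 2 := by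
    rw [hv', normSq_eq_norm_sq]
    exact pow_le_pow_left₀ (norm_nonneg _) ha 2
  have hu0 : 0 ≤ u := normSq_nonneg _
  have hv0 : 0 ≤ v := normSq_nonneg _
  rw [mul_pow, mul_pow, e1, e2]
  have hD : (r+s)^2*(1+u*v+2*t) - (u+v+2*t)*(1+r*s)^2
      = 2*(r*s-t)*(1-r^2)*(1-s^2) + (r^2-u)*(1-s^2)*(1+2*(r*s)+s^2)
        + (s^2-v)*(1-r^2)*(1+2*(r*s)+r^2) + (r+s)^2*(r^2-u)*(s^2-v) := by ring
  have t1 : 0 ≤ 2*(r*s-t)*(1-r^2)*(1-s^2) := by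
    apply mul_nonneg
    apply mul_nonneg
    · linarith
    · nlinarith
    · nlinarith
  have t2 : 0 ≤ (r^2-u)*(1-s^2)*(1+2*(r*s)+s^2) := by
    apply mul_nonneg
    apply mul_nonneg
    · linarith
    · nlinarith
    · nlinarith
  have t3 : 0 ≤ (s^2-v)*(1-r^2)*(1+2*(r*s)+r^2) := by
    apply mul_nonneg
    apply mul_nonneg
    · linarith
    · nlinarith
    · nlinarith
  have t4 : 0 ≤ (r+s)^2*(r^2-u)*(s^2-v) := by
    apply mul_nonneg
    apply mul_nonneg
    · positivity
    · linarith
    · linarith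
  linarith

lemma mobius_exists {X : Set ℂ} [CompactSpace X] [Nonempty X] {f : C(X, ℂ)} (hf : f ∈ RX X)
    (hf1 : ∀ z, ‖f z‖ ≤ 1) {a : ℂ} (ha : ‖a‖ < 1) :
    ∃ g : C(X, ℂ), g ∈ RX X ∧ (∀ z, ‖g z‖ ≤ 1) ∧
      ∀ z, g z * (1 - (starRingEnd ℂ) a * f z) = f z - a := by
  set D : C(X, ℂ) := (1 : C(X, ℂ)) - (starRingEnd ℂ) a • f with hDdef
  have hDz : ∀ z, D z = 1 - (starRingEnd ℂ) a * f z := fun z => by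
    simp [hDdef]
  have hD : ∀ z, D z ≠ 0 := by
    intro z h0
    rw [hDz z, sub_eq_zero] at h0
    have : ‖(starRingEnd ℂ) a * f z‖ < 1 := by
      rw [norm_mul, RCLike.norm_conj]
      calc ‖a‖ * ‖f z‖ ≤ ‖a‖ * 1 := by
            exact mul_le_mul_of_nonneg_left (hf1 z) (norm_nonneg _)
        _ < 1 := by simpa using ha
    rw [← h0] at this
    simp at this
  have hDmem : D ∈ RX X := sub_mem (one_mem _) (Subalgebra.smul_mem _ hf _)
  refine ⟨(f - algebraMap ℂ C(X, ℂ) a) * cinv D hD,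
    mul_mem (sub_mem hf (Subalgebra.algebraMap_mem _ a)) (cinv_mem_RX hDmem hD), ?_, ?_⟩
  · intro z
    have : ((f - algebraMap ℂ C(X, ℂ) a) * cinv D hD) z = (f z - a) * (D z)⁻¹ := by
      simp [ContinuousMap.mul_apply, ContinuousMap.sub_apply]
    rw [this, norm_mul, norm_inv, ← div_eq_mul_inv, div_le_one (norm_pos_iff.2 (hD z))]
    rw [hDz z]
    exact mobius_norm_le (hf1 z) ha.le
  · intro z
    have : ((f - algebraMap ℂ C(X, ℂ) a) * cinv D hD) z = (f z - a) * (D z)⁻¹ := by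
      simp [ContinuousMap.mul_apply, ContinuousMap.sub_apply]
    rw [this, ← hDz z, mul_assoc, inv_mul_cancel₀ (hD z), mul_one]


/-- The evaluation character `χ_x`, `χ_x(u) = u(x)`, as a continuous linear functional
on `R(X)`. -/
noncomputable def evalChar (X : Set ℂ) [CompactSpace X] (x : X) : RX X →L[ℂ] ℂ :=
  LinearMap.mkContinuous
    { toFun := fun u => (u : C(X, ℂ)) x
      map_add' := fun u v => rfl
      map_smul' := fun c u => rfl } 1
    (fun u => by
      rw [one_mul]
      exact ContinuousMap.norm_coe_le_norm (u : C(X, ℂ)) x)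

def SRel (X : Set ℂ) [CompactSpace X] (x y : X) : Prop :=
  ∃ c : ℝ, 0 ≤ c ∧ c < 1 ∧ ∀ f : C(X, ℂ), f ∈ RX X → (∀ z, ‖f z‖ ≤ 1) → f y = 0 → ‖f x‖ ≤ c

set_option maxHeartbeats 1000000 in
set_option synthInstance.maxHeartbeats 400000 in
lemma N2S {X : Set ℂ} [CompactSpace X] [Nonempty X] {x y : X}
    (h : ‖evalChar X x - evalChar X y‖ < 2) : SRel X x y := by
  obtain ⟨d, hd⟩ : ∃ d : ℝ, d = ‖evalChar X x - evalChar X y‖ := ⟨_, rfl⟩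
  rw [← hd] at h
  have hd0 : 0 ≤ d := hd ▸ ContinuousLinearMap.opNorm_nonneg _
  refine ⟨4 * d / (4 + d ^ 2), by positivity, by
    rw [div_lt_one (by positivity)]
    nlinarith [pow_pos (show (0:ℝ) < 2 - d by linarith) 2], ?_⟩
  intro f hfmem hf1 hfy
  by_cases hfx : f x = 0
  · rw [hfx]; simp; positivity
  have hρ : (0:ℝ) < ‖f x‖ := norm_pos_iff.2 hfx
  set ρ := ‖f x‖ with hρdef
  have hρ1 : ρ ≤ 1 := hf1 x
  have hρC : (ρ : ℂ) ≠ 0 := by exact_mod_cast hρ.ne'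
  set lam : ℂ := (starRingEnd ℂ) (f x) / (ρ : ℂ) with hlam
  have hlamnorm : ‖lam‖ = 1 := by
    rw [hlam, norm_div, RCLike.norm_conj, Complex.norm_real, Real.norm_eq_abs,
      abs_of_nonneg hρ.le, ← hρdef, div_self hρ.ne']
  set f' : C(X, ℂ) := lam • f with hf'
  have hf'mem : f' ∈ RX X := Subalgebra.smul_mem _ hfmem _
  have hf'1 : ∀ z, ‖f' z‖ ≤ 1 := fun z => by
    simp only [hf', ContinuousMap.smul_apply, norm_smul, hlamnorm, one_mul, smul_eq_mul,
      norm_mul]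
    exact hf1 z
  have hf'y : f' y = 0 := by simp [hf', hfy]
  have hfx2 : ((starRingEnd ℂ) (f x)) * f x = (((ρ^2 : ℝ)) : ℂ) := by
    rw [mul_comm, Complex.mul_conj]
    norm_cast
    rw [Complex.normSq_eq_norm_sq]
  have hf'x : f' x = (ρ : ℂ) := by
    show lam * f x = _
    rw [hlam, div_mul_eq_mul_div, hfx2]
    push_cast
    rw [sq, mul_div_assoc, div_self hρC, mul_one]
  set t := d / 2 with ht
  have ht0 : 0 ≤ t := by rw [ht]; positivity
  have ht1 : t < 1 := by rw [ht]; linarith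
  have hanorm : ‖((t : ℝ) : ℂ)‖ < 1 := by
    rw [Complex.norm_real, Real.norm_eq_abs, abs_of_nonneg ht0]; exact ht1
  obtain ⟨g, hgmem, hg1, hgeq⟩ := mobius_exists hf'mem hf'1 hanorm
  have hconj : (starRingEnd ℂ) ((t : ℝ) : ℂ) = ((t : ℝ) : ℂ) := Complex.conj_ofReal t
  have hgy : g y = -((t : ℝ) : ℂ) := by
    have := hgeq y
    rw [hf'y, hconj] at this
    simpa using this
  have hgx : g x * (1 - (t : ℂ) * (ρ : ℂ)) = (ρ : ℂ) - (t : ℂ) := by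
    have := hgeq x
    rw [hf'x, hconj] at this
    exact this
  have hden : (0:ℝ) < 1 - t * ρ := by nlinarith
  have hdenC : (1 - (t : ℂ) * (ρ : ℂ)) ≠ 0 := by
    rw [show (1 - (t : ℂ) * (ρ : ℂ)) = (((1 - t * ρ : ℝ)) : ℂ) by push_cast; ring]
    exact_mod_cast hden.ne'
  have hgxval : g x = ((((ρ - t) / (1 - t * ρ)) : ℝ) : ℂ) := by
    have h2 : ((((ρ - t) / (1 - t * ρ)) : ℝ) : ℂ) * (1 - (t:ℂ) * (ρ:ℂ)) = (ρ:ℂ) - (t:ℂ) := by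
      push_cast
      exact div_mul_cancel₀ _ hdenC
    exact mul_right_cancel₀ hdenC (hgx.trans h2.symm)
  have hgnorm : ‖(⟨g, hgmem⟩ : RX X)‖ ≤ 1 := by
    show ‖g‖ ≤ 1
    exact (ContinuousMap.norm_le _ zero_le_one).2 hg1
  have hbound : ‖g x - g y‖ ≤ d := by
    have h1 : ‖(evalChar X x - evalChar X y) (⟨g, hgmem⟩ : RX X)‖
        ≤ ‖evalChar X x - evalChar X y‖ * ‖(⟨g, hgmem⟩ : RX X)‖ :=
      ContinuousLinearMap.le_opNorm _ _
    rw [← hd] at h1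
    have h2 : (evalChar X x - evalChar X y) (⟨g, hgmem⟩ : RX X) = g x - g y := rfl
    rw [h2] at h1
    calc ‖g x - g y‖ ≤ d * ‖(⟨g, hgmem⟩ : RX X)‖ := h1
      _ ≤ d * 1 := mul_le_mul_of_nonneg_left hgnorm hd0
      _ = d := mul_one d
  have hkey : ρ * (1 - t ^ 2) / (1 - t * ρ) ≤ d := by
    have e1 : g x - g y = (((ρ - t) / (1 - t * ρ) + t : ℝ) : ℂ) := by
      rw [hgxval, hgy]; push_cast; ring
    rw [e1, Complex.norm_real, Real.norm_eq_abs] at hbound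
    have e2 : (ρ - t) / (1 - t * ρ) + t = ρ * (1 - t ^ 2) / (1 - t * ρ) := by
      rw [div_add' _ _ _ hden.ne']; congr 1; ring
    rw [e2] at hbound
    have hnn : 0 ≤ ρ * (1 - t ^ 2) / (1 - t * ρ) := by
      apply div_nonneg _ hden.le
      apply mul_nonneg hρ.le
      nlinarith [ht0, ht1]
    rwa [abs_of_nonneg hnn] at hbound
  rw [div_le_iff₀ hden] at hkey
  rw [ht] at hkey
  rw [le_div_iff₀ (by positivity)]
  nlinarith [hkey]

set_option maxHeartbeats 1000000 in
set_option synthInstance.maxHeartbeats 400000 in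
lemma S2N {X : Set ℂ} [CompactSpace X] [Nonempty X] {x y : X}
    (h : SRel X x y) : ‖evalChar X x - evalChar X y‖ < 2 := by
  obtain ⟨c, hc0, hc1, hc⟩ := h
  have main : ∀ u : RX X, ‖(u : C(X, ℂ)) x - (u : C(X, ℂ)) y‖ ≤ 2 * c * ‖u‖ := by
    intro u
    by_cases hu0 : (u : C(X, ℂ)) = 0
    · rw [hu0]; simp only [ContinuousMap.zero_apply, sub_self, norm_zero]; positivity
    have hN : (0:ℝ) < ‖(u : C(X, ℂ))‖ := norm_pos_iff.2 hu0
    set N := ‖(u : C(X, ℂ))‖ with hNdef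
    have claim : ∀ r : ℝ, 0 < r → r < 1 →
        r * ‖(u : C(X, ℂ)) x - (u : C(X, ℂ)) y‖ ≤ 2 * c * N := by
      intro r hr0 hr1
      set μ : ℂ := ((r / N : ℝ) : ℂ) with hμ
      set f : C(X, ℂ) := μ • (u : C(X, ℂ)) with hf
      have hfmem : f ∈ RX X := Subalgebra.smul_mem _ u.2 _
      have hμn : ‖μ‖ = r / N := by
        rw [hμ, Complex.norm_real, Real.norm_eq_abs, abs_of_nonneg (by positivity)]
      have hfr : ∀ z, ‖f z‖ ≤ r := fun z => by
        simp only [hf, ContinuousMap.smul_apply, norm_smul, hμn, smul_eq_mul, norm_mul]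
        calc r / N * ‖(u : C(X, ℂ)) z‖ ≤ r / N * N := by
              apply mul_le_mul_of_nonneg_left _ (by positivity)
              exact ContinuousMap.norm_coe_le_norm _ z
          _ = r := by field_simp
      have hf1 : ∀ z, ‖f z‖ ≤ 1 := fun z => (hfr z).trans hr1.le
      have hanorm : ‖f y‖ < 1 := lt_of_le_of_lt (hfr y) hr1
      obtain ⟨g, hgmem, hg1, hgeq⟩ := mobius_exists hfmem hf1 hanorm
      have hgy : g y = 0 := by
        have h1 := hgeq y
        have h2 : (1 : ℂ) - (starRingEnd ℂ) (f y) * f y ≠ 0 := by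
          intro h0
          rw [sub_eq_zero] at h0
          have : ‖(starRingEnd ℂ) (f y) * f y‖ < 1 := by
            rw [norm_mul, RCLike.norm_conj]
            nlinarith [hanorm, norm_nonneg (f y)]
          rw [← h0] at this; simp at this
        have h3 : g y * (1 - (starRingEnd ℂ) (f y) * f y) = 0 := by rw [h1]; ring
        exact (mul_eq_zero.1 h3).resolve_right h2
      have hgx : ‖g x‖ ≤ c := hc g hgmem hg1 hgy
      have hdenx : ‖(1 : ℂ) - (starRingEnd ℂ) (f y) * f x‖ ≤ 2 := by
        calc ‖(1 : ℂ) - (starRingEnd ℂ) (f y) * f x‖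
            ≤ ‖(1 : ℂ)‖ + ‖(starRingEnd ℂ) (f y) * f x‖ := norm_sub_le _ _
          _ ≤ 1 + 1 := by
              apply add_le_add
              · simp
              · rw [norm_mul, RCLike.norm_conj]
                exact mul_le_one₀ (hf1 y) (norm_nonneg _) (hf1 x)
          _ = 2 := by norm_num
      have hfxa : ‖f x - f y‖ ≤ 2 * c := by
        rw [← hgeq x, norm_mul]
        calc ‖g x‖ * ‖1 - (starRingEnd ℂ) (f y) * f x‖ ≤ c * 2 := by
              apply mul_le_mul hgx hdenx (norm_nonneg _) hc0
          _ = 2 * c := by ring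
      have hfd : f x - f y = μ * ((u : C(X, ℂ)) x - (u : C(X, ℂ)) y) := by
        simp [hf, ContinuousMap.smul_apply]; ring
      rw [hfd, norm_mul, hμn] at hfxa
      rw [div_mul_eq_mul_div, div_le_iff₀ hN] at hfxa
      exact hfxa
    -- pass to the limit r → 1
    by_contra hcon
    push_neg at hcon
    rw [show ‖u‖ = ‖(u : C(X, ℂ))‖ from rfl, ← hNdef] at hcon
    set B := ‖(u : C(X, ℂ)) x - (u : C(X, ℂ)) y‖ with hB
    have hB0 : 0 < B := lt_of_le_of_lt (by positivity) hcon
    have hr0 : 0 < (2 * c * N + B) / (2 * B) := by positivity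
    have hr1 : (2 * c * N + B) / (2 * B) < 1 := by
      rw [div_lt_one (by positivity)]
      linarith
    have := claim _ hr0 hr1
    rw [div_mul_eq_mul_div, div_le_iff₀ (by positivity)] at this
    nlinarith [mul_pos hB0 (sub_pos.2 hcon)]
  have hle : ‖evalChar X x - evalChar X y‖ ≤ 2 * c := by
    apply ContinuousLinearMap.opNorm_le_bound _ (by positivity)
    intro u
    exact main u
  linarith

set_option maxHeartbeats 1000000 in
set_option synthInstance.maxHeartbeats 400000 in
lemma S_trans {X : Set ℂ} [CompactSpace X] [Nonempty X] {x y z : X}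
    (h1 : SRel X x y) (h2 : SRel X y z) : SRel X x z := by
  obtain ⟨c1, hc10, hc11, hc1⟩ := h1
  obtain ⟨c2, hc20, hc21, hc2⟩ := h2
  have hden0 : (0:ℝ) < 1 + c1 * c2 := by nlinarith
  refine ⟨(c1 + c2) / (1 + c1 * c2), by positivity, ?_, ?_⟩
  · rw [div_lt_one hden0]
    nlinarith [mul_pos (show (0:ℝ) < 1 - c1 by linarith) (show (0:ℝ) < 1 - c2 by linarith)]
  intro f hfmem hf1 hfz
  have hfy : ‖f y‖ ≤ c2 := hc2 f hfmem hf1 hfz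
  have hfy1 : ‖f y‖ < 1 := lt_of_le_of_lt hfy hc21
  obtain ⟨g, hgmem, hg1, hgeq⟩ := mobius_exists hfmem hf1 hfy1
  have hgy : g y = 0 := by
    have hne : (1 : ℂ) - (starRingEnd ℂ) (f y) * f y ≠ 0 := by
      intro h0
      rw [sub_eq_zero] at h0
      have : ‖(starRingEnd ℂ) (f y) * f y‖ < 1 := by
        rw [norm_mul, RCLike.norm_conj]
        nlinarith [norm_nonneg (f y)]
      rw [← h0] at this; simp at this
    have h3 : g y * (1 - (starRingEnd ℂ) (f y) * f y) = 0 := by rw [hgeq y]; ring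
    exact (mul_eq_zero.1 h3).resolve_right hne
  have hgx : ‖g x‖ ≤ c1 := hc1 g hgmem hg1 hgy
  -- f x * (1 + conj (f y) * g x) = g x + f y
  have hsolve : f x * (1 + (starRingEnd ℂ) (f y) * g x) = g x + f y := by
    linear_combination (-1 : ℂ) * hgeq x
  have hdisk : ‖g x + f y‖ * (1 + c1 * c2) ≤ (c1 + c2) * ‖1 + (starRingEnd ℂ) (f y) * g x‖ := by
    have := disk_ineq (w := g x) (a := f y) (r := c1) (s := c2) hgx hfy
      hc11.le hc21.le hc10 hc20
    exact this
  have hdenx : (0:ℝ) < ‖(1 : ℂ) + (starRingEnd ℂ) (f y) * g x‖ := by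
    have h4 : ‖(starRingEnd ℂ) (f y) * g x‖ ≤ c2 * c1 := by
      rw [norm_mul, RCLike.norm_conj]
      exact mul_le_mul hfy hgx (norm_nonneg _) hc20
    have h5 : ‖(1 : ℂ) + (starRingEnd ℂ) (f y) * g x‖ ≥ ‖(1:ℂ)‖ - ‖(starRingEnd ℂ) (f y) * g x‖ := by
      have := norm_sub_norm_le (1 : ℂ) (-((starRingEnd ℂ) (f y) * g x))
      simpa [sub_neg_eq_add] using this
    simp only [norm_one] at h5
    nlinarith
  rw [le_div_iff₀ hden0]
  have hfin : ‖f x‖ * ‖1 + (starRingEnd ℂ) (f y) * g x‖ * (1 + c1 * c2)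
      ≤ (c1 + c2) * ‖1 + (starRingEnd ℂ) (f y) * g x‖ := by
    rw [← norm_mul, hsolve]
    exact hdisk
  nlinarith [hfin, hdenx, mul_le_mul_of_nonneg_right (le_refl (c1+c2)) hdenx.le]

set_option maxHeartbeats 1000000 in
set_option synthInstance.maxHeartbeats 400000 in
/-- The Gleason relation `x ∼ y ⟺ ‖χ_x − χ_y‖ < 2` on a compact `X ⊆ ℂ` (the norm being the
dual norm on the dual of `R(X)`) is an equivalence relation; in particular it is transitive. -/
theorem gleason_relation_equivalence (X : Set ℂ) [CompactSpace X] (hX : X.Nonempty) :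
    Equivalence (fun x y : X => ‖evalChar X x - evalChar X y‖ < 2) ∧
    (∀ x y z : X, ‖evalChar X x - evalChar X y‖ < 2 → ‖evalChar X y - evalChar X z‖ < 2 →
      ‖evalChar X x - evalChar X z‖ < 2) := by
  have : Nonempty X := hX.to_subtype
  have htrans : ∀ x y z : X, ‖evalChar X x - evalChar X y‖ < 2 →
      ‖evalChar X y - evalChar X z‖ < 2 → ‖evalChar X x - evalChar X z‖ < 2 :=
    fun x y z h1 h2 => S2N (S_trans (N2S h1) (N2S h2))
  refine ⟨⟨fun x => ?_, fun {x y} h => ?_, fun {x y z} h1 h2 => htrans _ _ _ h1 h2⟩, htrans⟩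
  · have hle : ‖evalChar X x - evalChar X x‖ ≤ 0 := by
      apply ContinuousLinearMap.opNorm_le_bound _ le_rfl
      intro u
      have h1 : (evalChar X x - evalChar X x) u
          = (u : C(X, ℂ)) x - (u : C(X, ℂ)) x := rfl
      rw [h1, sub_self, norm_zero]
      positivity
    linarith
  · have hle : ‖evalChar X y - evalChar X x‖ ≤ ‖evalChar X x - evalChar X y‖ := by
      apply ContinuousLinearMap.opNorm_le_bound _ (ContinuousLinearMap.opNorm_nonneg _)
      intro u
      have h1 : (evalChar X y - evalChar X x) u
          = (u : C(X, ℂ)) y - (u : C(X, ℂ)) x := rfl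
      have h2 : (evalChar X x - evalChar X y) u
          = (u : C(X, ℂ)) x - (u : C(X, ℂ)) y := rfl
      rw [h1]
      calc ‖(u : C(X, ℂ)) y - (u : C(X, ℂ)) x‖
          = ‖(u : C(X, ℂ)) x - (u : C(X, ℂ)) y‖ := norm_sub_rev _ _
        _ = ‖(evalChar X x - evalChar X y) u‖ := by rw [h2]
        _ ≤ ‖evalChar X x - evalChar X y‖ * ‖u‖ := ContinuousLinearMap.le_opNorm _ _
    exact lt_of_le_of_lt hle h
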